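/- Let W(s) = (1−s²)²/4. For ε ∈ (0,1) set a_ε := 2/(1+ε²)³, s⁰_ε := ε + ε³ + ε|log ε|, and p_ε(s) := −a_ε (s − s⁰_ε)² + 1. Then for every s ∈ [ε|log ε|, s⁰_ε] one has | ε p_ε″(s) − W′(p_ε(s))/ε | ≤ 8ε. (Indeed, p_ε(s) ∈ [1 − 2ε²/(1+ε²), 1] on this interval, so |W′(p_ε(s))| ≤ 4ε²/(1+ε²), while ε|p_ε″(s)| = 4ε/(1+ε²)³.) -/

import Mathlib

/-- The double-well potential `W(s) = (1 − s²)²/4`. -/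
noncomputable def W (s : ℝ) : ℝ := (1 - s ^ 2) ^ 2 / 4

/-- Its derivative `W′(s) = −s(1 − s²)`. -/
noncomputable def W' (s : ℝ) : ℝ := -s * (1 - s ^ 2)

/-- `a_ε = 2/(1+ε²)³`. -/
noncomputable def aeps (ε : ℝ) : ℝ := 2 / (1 + ε ^ 2) ^ 3

/-- `s⁰_ε = ε + ε³ + ε|log ε|`. -/
noncomputable def s0 (ε : ℝ) : ℝ := ε + ε ^ 3 + ε * |Real.log ε|

/-- The gluing parabola `p_ε(s) = −a_ε(s − s⁰_ε)² + 1`. -/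
noncomputable def pglue (ε : ℝ) (s : ℝ) : ℝ := -(aeps ε) * (s - s0 ε) ^ 2 + 1

lemma pglue_deriv (ε : ℝ) : deriv (pglue ε) = fun s => -(aeps ε) * (2 * (s - s0 ε)) := by
  funext s
  have h1 : HasDerivAt (fun x : ℝ => (x - s0 ε) ^ 2) (2 * (s - s0 ε)) s := by
    simpa using ((hasDerivAt_id s).sub_const (s0 ε)).fun_pow 2
  have hfun : pglue ε = fun x => -(aeps ε) * (x - s0 ε) ^ 2 + 1 := rfl
  have h : HasDerivAt (pglue ε) (-(aeps ε) * (2 * (s - s0 ε))) s := by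
    rw [hfun]
    simpa [neg_mul, mul_assoc] using (h1.const_mul (-(aeps ε))).add_const 1
  exact h.deriv

lemma pglue_deriv2 (ε : ℝ) (s : ℝ) : deriv (deriv (pglue ε)) s = -(aeps ε) * 2 := by
  rw [pglue_deriv]
  have h : HasDerivAt (fun x : ℝ => -(aeps ε) * (2 * (x - s0 ε))) (-(aeps ε) * 2) s := by
    have : HasDerivAt (fun x : ℝ => 2 * (x - s0 ε)) 2 s := by
      simpa using ((hasDerivAt_id s).sub_const (s0 ε)).const_mul 2
    simpa using this.const_mul (-(aeps ε))
  exact h.deriv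

/-- Allen–Cahn operator estimate in the gluing region: for every
`s ∈ [ε|log ε|, s⁰_ε]`, `|ε p_ε″(s) − W′(p_ε(s))/ε| ≤ 8ε`. -/
theorem stmt_16 (ε : ℝ) (hε : ε ∈ Set.Ioo (0:ℝ) 1) (s : ℝ)
    (hs : s ∈ Set.Icc (ε * |Real.log ε|) (s0 ε)) :
    |ε * deriv (deriv (pglue ε)) s - W' (pglue ε s) / ε| ≤ 8 * ε := by
  obtain ⟨hε0, hε1⟩ := hε
  obtain ⟨hs1, hs2⟩ := hs
  rw [pglue_deriv2]
  set t : ℝ := s0 ε - s with ht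
  have ht0 : 0 ≤ t := by linarith
  have htle : t ≤ ε + ε ^ 3 := by
    have : s0 ε = ε + ε ^ 3 + ε * |Real.log ε| := rfl
    simp only [ht, this]; linarith
  have hD : (1:ℝ) ≤ (1 + ε ^ 2) ^ 3 := by nlinarith [sq_nonneg ε]
  have hDpos : (0:ℝ) < (1 + ε ^ 2) ^ 3 := by linarith
  set u : ℝ := aeps ε * t ^ 2 with hu
  have hu0 : 0 ≤ u := by
    apply mul_nonneg _ (sq_nonneg t)
    unfold aeps; positivity
  have huA : u * (1 + ε ^ 2) ^ 3 = 2 * t ^ 2 := by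
    simp only [hu]; unfold aeps; field_simp
  have hule : u ≤ 2 * ε ^ 2 / (1 + ε ^ 2) := by
    rw [le_div_iff₀ (by positivity : (0:ℝ) < 1 + ε ^ 2)]
    have htsq : t ^ 2 ≤ (ε + ε ^ 3) ^ 2 := by nlinarith
    nlinarith [huA, htsq, hDpos, sq_nonneg (1 + ε ^ 2), sq_nonneg ε,
      mul_nonneg hu0 (sq_nonneg ε)]
  have hu1 : u < 1 := by
    have h2 : 2 * ε ^ 2 / (1 + ε ^ 2) < 1 := by
      rw [div_lt_one (by positivity)]; nlinarith
    linarith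
  have hu2 : u ≤ 2 * ε ^ 2 := by
    have : 2 * ε ^ 2 / (1 + ε ^ 2) ≤ 2 * ε ^ 2 := by
      rw [div_le_iff₀ (by positivity)]; nlinarith [sq_nonneg ε]
    linarith
  have hp : pglue ε s = 1 - u := by
    simp only [pglue, hu, ht]; ring
  rw [hp]
  have hA : aeps ε ≤ 2 := by
    unfold aeps; rw [div_le_iff₀ hDpos]; nlinarith
  have hA0 : 0 ≤ aeps ε := by unfold aeps; positivity
  have hW : |W' (1 - u)| ≤ 4 * ε ^ 2 := by
    rw [abs_le]
    constructor <;> (simp only [W']; nlinarith [mul_nonneg hu0 (sub_nonneg.2 hu1.le)])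
  have hb1 : |ε * (-(aeps ε) * 2)| ≤ 4 * ε := by
    rw [abs_le]; constructor <;> nlinarith
  have hb2 : |W' (1 - u) / ε| ≤ 4 * ε := by
    rw [abs_div, abs_of_pos hε0, div_le_iff₀ hε0]
    calc |W' (1 - u)| ≤ 4 * ε ^ 2 := hW
      _ = 4 * ε * ε := by ring
  calc |ε * (-(aeps ε) * 2) - W' (1 - u) / ε| ≤ |ε * (-(aeps ε) * 2)| + |W' (1 - u) / ε| :=
        abs_sub _ _
    _ ≤ 4 * ε + 4 * ε := add_le_add hb1 hb2
    _ = 8 * ε := by ring
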